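/- Let a, b, c, d ∈ ℂ all be nonzero, and suppose a·d = b·c. In ℂ² ⊗ ℂ² with standard bases e₁, e₂ and f₁, f₂, every nonzero simple tensor contained in the span of { e₁ ⊗ f₁, e₂ ⊗ f₂, (a·e₁ + b·e₂) ⊗ (c·f₁ + d·f₂) } is of the form (x·e₁ + z·e₂) ⊗ (x·f₁ + z·f₂) up to a nonzero scalar, for some (x, z) ∈ ℂ² \ {0}. Conversely every such tensor lies in this span. -/

import Mathlib

open TensorProduct

theorem stmt_6 (a b c d : ℂ)
    (ha : a ≠ 0) (hb : b ≠ 0) (hc : c ≠ 0) (hd : d ≠ 0)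
    (habcd : a * d = b * c)
    (e : Fin 2 → (Fin 2 → ℂ)) (f : Fin 2 → (Fin 2 → ℂ))
    (he : ∀ i, e i = Pi.single i 1) (hf : ∀ i, f i = Pi.single i 1)
    (S : Submodule ℂ ((Fin 2 → ℂ) ⊗[ℂ] (Fin 2 → ℂ)))
    (hS : S = Submodule.span ℂ
      {e 0 ⊗ₜ[ℂ] f 0, e 1 ⊗ₜ[ℂ] f 1,
        (a • e 0 + b • e 1) ⊗ₜ[ℂ] (c • f 0 + d • f 1)}) :
    (∀ t ∈ S, t ≠ 0 → (∃ (x y : Fin 2 → ℂ), t = x ⊗ₜ[ℂ] y) →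
      ∃ (x z γ : ℂ), γ ≠ 0 ∧ (x, z) ≠ (0, 0) ∧
        t = γ • ((x • e 0 + z • e 1) ⊗ₜ[ℂ] (x • f 0 + z • f 1)))
    ∧ (∀ (x z γ : ℂ),
        γ • ((x • e 0 + z • e 1) ⊗ₜ[ℂ] (x • f 0 + z • f 1)) ∈ S) := by
  subst hS
  simp only [he, hf]
  set s0 : Fin 2 → ℂ := Pi.single 0 1 with hs0
  set s1 : Fin 2 → ℂ := Pi.single 1 1 with hs1
  set g1 := s0 ⊗ₜ[ℂ] s0 with hg1
  set g2 := s1 ⊗ₜ[ℂ] s1 with hg2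
  set g3 := (a • s0 + b • s1) ⊗ₜ[ℂ] (c • s0 + d • s1) with hg3
  have hbasis : ∀ x : Fin 2 → ℂ, x = x 0 • s0 + x 1 • s1 := by
    intro x; funext i; fin_cases i <;> simp [hs0, hs1]
  have m1 : g1 ∈ Submodule.span ℂ {g1, g2, g3} :=
    Submodule.subset_span (by simp)
  have m2 : g2 ∈ Submodule.span ℂ {g1, g2, g3} :=
    Submodule.subset_span (by simp)
  have m3 : g3 ∈ Submodule.span ℂ {g1, g2, g3} :=
    Submodule.subset_span (by simp)
  constructor
  · rintro t ht htne ⟨x, y, rfl⟩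
    -- the antisymmetrizing functional
    let B : (Fin 2 → ℂ) →ₗ[ℂ] (Fin 2 → ℂ) →ₗ[ℂ] ℂ :=
      LinearMap.mk₂ ℂ (fun u v => u 0 * v 1 - u 1 * v 0)
        (fun u u' v => by simp [Pi.add_apply]; ring)
        (fun r u v => by simp [Pi.smul_apply, smul_eq_mul]; ring)
        (fun u v v' => by simp [Pi.add_apply]; ring)
        (fun r u v => by simp [Pi.smul_apply, smul_eq_mul]; ring)
    have hker : Submodule.span ℂ {g1, g2, g3} ≤
        LinearMap.ker (TensorProduct.lift B) := by
      rw [Submodule.span_le]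
      rintro g hg
      simp only [Set.mem_insert_iff, Set.mem_singleton_iff] at hg
      rcases hg with rfl | rfl | rfl
      · simp [hg1, hs0, LinearMap.mem_ker, B]
      · simp [hg2, hs1, LinearMap.mem_ker, B]
      · simp only [hg3, SetLike.mem_coe, LinearMap.mem_ker,
          TensorProduct.lift.tmul, LinearMap.mk₂_apply, B]
        simp [hs0, hs1, Pi.single_apply]
        linear_combination habcd
    have hk : x 0 * y 1 - x 1 * y 0 = 0 := by
      have h := hker ht
      simpa [LinearMap.mem_ker, B] using h
    have hkey : x 0 * y 1 = x 1 * y 0 := by linear_combination hk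
    have hx : x ≠ 0 := by rintro rfl; exact htne (by simp)
    have hy : y ≠ 0 := by rintro rfl; exact htne (by simp)
    obtain ⟨γ, hγ, hyx⟩ : ∃ γ : ℂ, γ ≠ 0 ∧ y = γ • x := by
      by_cases h0 : x 0 = 0
      · have h1 : x 1 ≠ 0 := by
          intro h; apply hx; funext i; fin_cases i <;> simp [h0, h]
        have hy0 : y 0 = 0 := by
          have h2 : x 1 * y 0 = 0 := by rw [← hkey, h0, zero_mul]
          exact (mul_eq_zero.mp h2).resolve_left h1
        have hy1 : y 1 ≠ 0 := by
          intro h; apply hy; funext i; fin_cases i <;> simp [hy0, h]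
        refine ⟨y 1 / x 1, div_ne_zero hy1 h1, ?_⟩
        funext i; fin_cases i
        · simp [Pi.smul_apply, smul_eq_mul, h0, hy0]
        · simp only [Pi.smul_apply, smul_eq_mul]
          field_simp
          rfl
      · refine ⟨y 0 / x 0, ?_, ?_⟩
        · intro h
          have hy0 : y 0 = 0 := by
            field_simp at h
            simpa using h
          have hy1 : y 1 = 0 := by
            have h2 : x 0 * y 1 = 0 := by rw [hkey, hy0, mul_zero]
            exact (mul_eq_zero.mp h2).resolve_left h0
          exact hy (by funext i; fin_cases i <;> simp [hy0, hy1])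
        · funext i; fin_cases i
          · simp only [Pi.smul_apply, smul_eq_mul]
            field_simp
            rfl
          · simp only [Pi.smul_apply, smul_eq_mul]
            field_simp
            exact (by linear_combination hkey : y 1 * x 0 = y 0 * x 1)
    refine ⟨x 0, x 1, γ, hγ, ?_, ?_⟩
    · intro h
      rw [Prod.mk.injEq] at h
      exact hx (by funext i; fin_cases i <;> simp [h.1, h.2])
    · rw [hyx, ← hbasis x, TensorProduct.tmul_smul]
  · intro x z γ
    have had : a * d ≠ 0 := mul_ne_zero ha hd
    have key : g3 - (a * c) • g1 - (b * d) • g2 =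
        (a * d) • (s0 ⊗ₜ[ℂ] s1 + s1 ⊗ₜ[ℂ] s0) := by
      rw [hg1, hg2, hg3]
      simp only [TensorProduct.tmul_add, TensorProduct.add_tmul,
        ← TensorProduct.smul_tmul', TensorProduct.tmul_smul, smul_smul, smul_add]
      match_scalars <;> first | ring1 | linear_combination -habcd
    have h01 : s0 ⊗ₜ[ℂ] s1 + s1 ⊗ₜ[ℂ] s0 ∈ Submodule.span ℂ {g1, g2, g3} := by
      have hm : g3 - (a * c) • g1 - (b * d) • g2 ∈ Submodule.span ℂ {g1, g2, g3} :=
        Submodule.sub_mem _ (Submodule.sub_mem _ m3 (Submodule.smul_mem _ _ m1))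
          (Submodule.smul_mem _ _ m2)
      have heq : s0 ⊗ₜ[ℂ] s1 + s1 ⊗ₜ[ℂ] s0 =
          (a * d)⁻¹ • (g3 - (a * c) • g1 - (b * d) • g2) := by
        rw [key, inv_smul_smul₀ had]
      rw [heq]
      exact Submodule.smul_mem _ _ hm
    have htarget : γ • ((x • s0 + z • s1) ⊗ₜ[ℂ] (x • s0 + z • s1)) =
        (γ * x * x) • g1 + (γ * x * z) • (s0 ⊗ₜ[ℂ] s1 + s1 ⊗ₜ[ℂ] s0) +
          (γ * z * z) • g2 := by
      rw [hg1, hg2]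
      simp only [TensorProduct.tmul_add, TensorProduct.add_tmul,
        ← TensorProduct.smul_tmul', TensorProduct.tmul_smul, smul_smul, smul_add]
      module
    rw [htarget]
    exact Submodule.add_mem _
      (Submodule.add_mem _ (Submodule.smul_mem _ _ m1) (Submodule.smul_mem _ _ h01))
      (Submodule.smul_mem _ _ m2)
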